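/- Let G = G(m₀,m₁,m₂,m₃) with all mᵢ ≥ 2. Then every set of three pairwise nonadjacent vertices of G has a common neighbor. -/

import Mathlib

/-- The edge set of the tournament `T₄`. -/
def T4rel (i i' : Fin 4) : Prop :=
  (i.val, i'.val) ∈ [(0, 1), (0, 2), (0, 3), (1, 2), (2, 3), (3, 1)]

/-- The twisted graph `G(m₀, m₁, m₂, m₃)` where `m i` is the number of 4-cycles
in part `i`.  Vertices are triples `(i, j, x)` with `i ∈ Fin 4`, `j < m i`,
`x ∈ Z/4`. -/
def twistedGraph (m : Fin 4 → ℕ) :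
    SimpleGraph {v : Fin 4 × ℕ × ZMod 4 // v.2.1 < m v.1} where
  Adj p q :=
    (p.1.1 = q.1.1 ∧ p.1.2.1 = q.1.2.1 ∧
      (q.1.2.2 = p.1.2.2 + 1 ∨ p.1.2.2 = q.1.2.2 + 1)) ∨
    (p.1.1 = q.1.1 ∧ p.1.2.1 ≠ q.1.2.1 ∧ q.1.2.2 = p.1.2.2 + 2) ∨
    (T4rel p.1.1 q.1.1 ∧ q.1.2.2 = p.1.2.2 + 3) ∨
    (T4rel q.1.1 p.1.1 ∧ p.1.2.2 = q.1.2.2 + 3)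
  symm := by
    constructor
    rintro ⟨⟨i, j, x⟩, hp⟩ ⟨⟨i', j', x'⟩, hq⟩ h
    dsimp at h ⊢
    rcases h with ⟨h1, h2, h3⟩ | ⟨h1, h2, h3⟩ | ⟨h1, h2⟩ | ⟨h1, h2⟩
    · exact Or.inl ⟨h1.symm, h2.symm, h3.symm⟩
    · refine Or.inr (Or.inl ⟨h1.symm, Ne.symm h2, ?_⟩)
      rw [h3, add_assoc, show (2 : ZMod 4) + 2 = 0 by decide, add_zero]
    · exact Or.inr (Or.inr (Or.inr ⟨h1, h2⟩))
    · exact Or.inr (Or.inr (Or.inl ⟨h1, h2⟩))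
  loopless := by
    constructor
    rintro ⟨⟨i, j, x⟩, hp⟩ h
    dsimp at h
    rcases h with ⟨-, -, h | h⟩ | ⟨-, h, -⟩ | ⟨h, -⟩ | ⟨h, -⟩
    · simp only [left_eq_add] at h; exact absurd h (by decide)
    · simp only [left_eq_add] at h; exact absurd h (by decide)
    · exact h rfl
    · revert h; have := i.is_lt; unfold T4rel; fin_cases i <;> decide
    · revert h; have := i.is_lt; unfold T4rel; fin_cases i <;> decide

instance T4rel.dec (i i' : Fin 4) : Decidable (T4rel i i') := by
  unfold T4rel; infer_instance

namespace Stmt13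

def t4b (k ia : ℕ) : Bool :=
  (k == 0 && ia == 1) || (k == 0 && ia == 2) || (k == 0 && ia == 3) ||
  (k == 1 && ia == 2) || (k == 2 && ia == 3) || (k == 3 && ia == 1)

/-- Bool version of adjacency from vertex `a` (data `ia, xa`) to `b`; `e` says `ja = jb`. -/
def adjPairB (ia ib xa xb : ℕ) (e : Bool) : Bool :=
  (ia == ib && e && ((xb == (xa+1)%4) || (xa == (xb+1)%4))) ||
  (ia == ib && !e && (xb == (xa+2)%4)) ||
  (t4b ia ib && (xb == (xa+3)%4)) ||
  (t4b ib ia && (xa == (xb+3)%4))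

def nadjB (ia ib xa xb : ℕ) (e : Bool) : Bool := !(adjPairB ia ib xa xb e)

/-- Adjacency of a candidate witness at `(k, y)` to vertex `a` at `(ia, xa)`,
where `je`/`jn` are known facts `j = ja` / `j ≠ ja`. -/
def adjB (k ia y xa : ℕ) (je jn : Bool) : Bool :=
  (k == ia && je && ((xa == (y+1)%4) || (y == (xa+1)%4))) ||
  (k == ia && jn && (xa == (y+2)%4)) ||
  (t4b k ia && (xa == (y+3)%4)) ||
  (t4b ia k && (y == (xa+3)%4))

def hypB (i0 i1 i2 x0 x1 x2 : ℕ) (e01 e02 e12 : Bool) : Bool :=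
  (!e01 || (e02 == e12)) && (!e02 || (e01 == e12)) && (!e12 || (e01 == e02)) &&
  !(i0 == i1 && e01 && x0 == x1) && !(i0 == i2 && e02 && x0 == x2) &&
  !(i1 == i2 && e12 && x1 == x2) &&
  nadjB i0 i1 x0 x1 e01 && nadjB i0 i2 x0 x2 e02 && nadjB i1 i2 x1 x2 e12

def okB (i0 i1 i2 x0 x1 x2 : ℕ) (e01 e02 e12 : Bool) (k y s : ℕ) : Bool :=
  (!(s == 0) || k == i0) && (!(s == 1) || k == i1) && (!(s == 2) || k == i2) &&
  adjB k i0 y x0 (s == 0 || (s == 1 && e01) || (s == 2 && e02))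
                 (s == 3 || (s == 1 && !e01) || (s == 2 && !e02)) &&
  adjB k i1 y x1 (s == 1 || (s == 0 && e01) || (s == 2 && e12))
                 (s == 4 || (s == 0 && !e01) || (s == 2 && !e12)) &&
  adjB k i2 y x2 (s == 2 || (s == 0 && e02) || (s == 1 && e12))
                 (s == 5 || (s == 0 && !e02) || (s == 1 && !e12))

def findB (i0 i1 i2 x0 x1 x2 : ℕ) (e01 e02 e12 : Bool) : Bool :=
  (List.range 4).any fun k => (List.range 4).any fun y => (List.range 6).any fun s =>
    okB i0 i1 i2 x0 x1 x2 e01 e02 e12 k y s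

set_option maxHeartbeats 4000000 in
theorem keyB : ((List.range 4).all fun i0 => (List.range 4).all fun i1 =>
    (List.range 4).all fun i2 =>
    (List.range 4).all fun x1 => (List.range 4).all fun x2 =>
    [false,true].all fun e01 => [false,true].all fun e02 => [false,true].all fun e12 =>
      !hypB i0 i1 i2 0 x1 x2 e01 e02 e12 ||
        findB i0 i1 i2 0 x1 x2 e01 e02 e12) = true := by decide

lemma finbeq (a b : Fin 4) : (a.val = b.val) ↔ a = b := by revert a b; decide
lemma zval1 (a b : ZMod 4) : (a.val = (b.val+1)%4) ↔ a = b + 1 := by revert a b; decide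
lemma zval2 (a b : ZMod 4) : (a.val = (b.val+2)%4) ↔ a = b + 2 := by revert a b; decide
lemma zval3 (a b : ZMod 4) : (a.val = (b.val+3)%4) ↔ a = b + 3 := by revert a b; decide
lemma t4iff (a b : Fin 4) : (t4b a.val b.val = true) ↔ T4rel a b := by revert a b; decide

lemma adj_iff (m : Fin 4 → ℕ) (ia ib : Fin 4) (ja jb : ℕ) (xa xb : ZMod 4)
    (ha : ja < m ia) (hb : jb < m ib) :
    (twistedGraph m).Adj ⟨(ia, ja, xa), ha⟩ ⟨(ib, jb, xb), hb⟩ ↔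
      adjPairB ia.val ib.val xa.val xb.val (ja == jb) = true := by
  have hshow : (twistedGraph m).Adj ⟨(ia, ja, xa), ha⟩ ⟨(ib, jb, xb), hb⟩ ↔
      ((ia = ib ∧ ja = jb ∧ (xb = xa + 1 ∨ xa = xb + 1)) ∨
      (ia = ib ∧ ja ≠ jb ∧ xb = xa + 2) ∨
      (T4rel ia ib ∧ xb = xa + 3) ∨
      (T4rel ib ia ∧ xa = xb + 3)) := Iff.rfl
  rw [hshow]
  unfold adjPairB
  simp only [Bool.or_eq_true, Bool.and_eq_true, Bool.not_eq_true',
    beq_eq_false_iff_ne, beq_iff_eq, finbeq, zval1, zval2, zval3, t4iff]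
  simp only [or_assoc, and_assoc]

lemma adjB_shift (k ia : Fin 4) (y xa c : ZMod 4) (je jn : Bool) :
    adjB k.val ia.val ((y+c).val) ((xa+c).val) je jn = adjB k.val ia.val y.val xa.val je jn := by
  revert k ia y xa c je jn; decide

lemma nadjB_shift (ia ib : Fin 4) (xa xb c : ZMod 4) (e : Bool) :
    nadjB ia.val ib.val ((xa - c).val) ((xb - c).val) e = nadjB ia.val ib.val xa.val xb.val e := by
  revert ia ib xa xb c e; decide

lemma valsubeq (a b : ZMod 4) : (a - b).val = 0 ↔ a = b := by revert a b; decide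

lemma adjB_mono (k ia y xa : ℕ) (je jn : Bool) (jj ja : ℕ)
    (hje : je = true → jj = ja) (hjn : jn = true → jj ≠ ja)
    (h : adjB k ia y xa je jn = true) : adjPairB k ia y xa (jj == ja) = true := by
  unfold adjB at h; unfold adjPairB
  simp only [Bool.or_eq_true, Bool.and_eq_true] at h ⊢
  rcases h with ((⟨⟨h1, h2⟩, h3⟩ | ⟨⟨h1, h2⟩, h3⟩) | h) | h
  · exact Or.inl (Or.inl (Or.inl ⟨⟨h1, by simp [hje h2]⟩, h3⟩))
  · exact Or.inl (Or.inl (Or.inr ⟨⟨h1, by simp [hjn h2]⟩, h3⟩))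
  · exact Or.inl (Or.inr h)
  · exact Or.inr h

lemma adj_of_adjB (m : Fin 4 → ℕ) (k' ia : Fin 4) (y' Xa c : ZMod 4) (jj ja : ℕ)
    (hjj : jj < m k') (ha : ja < m ia) (je jn : Bool)
    (hje : je = true → jj = ja) (hjn : jn = true → jj ≠ ja)
    (h : adjB k'.val ia.val y'.val ((Xa - c).val) je jn = true) :
    (twistedGraph m).Adj ⟨(k', jj, y' + c), hjj⟩ ⟨(ia, ja, Xa), ha⟩ := by
  rw [adj_iff]
  apply adjB_mono _ _ _ _ _ _ jj ja hje hjn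
  have hs := adjB_shift k' ia y' (Xa - c) c je jn
  rw [sub_add_cancel] at hs
  rw [hs]; exact h

lemma fresh_ne (n : ℕ) : (if n = 0 then 1 else 0) ≠ n := by split <;> omega
lemma fresh_lt (n : ℕ) : (if n = 0 then 1 else 0) < 2 := by split <;> omega

lemma valinj (a b : ZMod 4) : a.val = b.val ↔ a = b := by revert a b; decide

lemma all_range_get {n : ℕ} {f : ℕ → Bool} (h : ((List.range n).all f) = true)
    {k : ℕ} (hk : k < n) : f k = true := by
  rw [List.all_eq_true] at h; exact h k (List.mem_range.mpr hk)

lemma all_bool_get {f : Bool → Bool} (h : ([false, true].all f) = true) (b : Bool) :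
    f b = true := by
  rw [List.all_eq_true] at h
  cases b
  · exact h false (by simp)
  · exact h true (by simp)

end Stmt13

open Stmt13

theorem stmt_13 (m : Fin 4 → ℕ) (hm : ∀ i, 2 ≤ m i)
    (p q r : {v : Fin 4 × ℕ × ZMod 4 // v.2.1 < m v.1})
    (hpq : p ≠ q) (hpr : p ≠ r) (hqr : q ≠ r)
    (npq : ¬ (twistedGraph m).Adj p q)
    (npr : ¬ (twistedGraph m).Adj p r)
    (nqr : ¬ (twistedGraph m).Adj q r) :
    ∃ v, (twistedGraph m).Adj v p ∧ (twistedGraph m).Adj v q ∧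
      (twistedGraph m).Adj v r := by
  obtain ⟨⟨ip, jp, xp⟩, hp⟩ := p
  obtain ⟨⟨iq, jq, xq⟩, hq⟩ := q
  obtain ⟨⟨ir, jr, xr⟩, hr⟩ := r
  -- Bool nonadjacency facts, shifted so that p sits at position 0
  have n01 : nadjB ip.val iq.val xp.val xq.val (jp == jq) = true := by
    simp only [nadjB, Bool.not_eq_true']
    exact Bool.eq_false_iff.mpr fun h => npq ((adj_iff m ip iq jp jq xp xq hp hq).mpr h)
  have n02 : nadjB ip.val ir.val xp.val xr.val (jp == jr) = true := by
    simp only [nadjB, Bool.not_eq_true']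
    exact Bool.eq_false_iff.mpr fun h => npr ((adj_iff m ip ir jp jr xp xr hp hr).mpr h)
  have n12 : nadjB iq.val ir.val xq.val xr.val (jq == jr) = true := by
    simp only [nadjB, Bool.not_eq_true']
    exact Bool.eq_false_iff.mpr fun h => nqr ((adj_iff m iq ir jq jr xq xr hq hr).mpr h)
  have s01 : nadjB ip.val iq.val 0 ((xq - xp).val) (jp == jq) = true := by
    have h := nadjB_shift ip iq xp xq xp (jp == jq)
    rw [sub_self, ZMod.val_zero] at h
    rw [h]; exact n01
  have s02 : nadjB ip.val ir.val 0 ((xr - xp).val) (jp == jr) = true := by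
    have h := nadjB_shift ip ir xp xr xp (jp == jr)
    rw [sub_self, ZMod.val_zero] at h
    rw [h]; exact n02
  have s12 : nadjB iq.val ir.val ((xq - xp).val) ((xr - xp).val) (jq == jr) = true := by
    rw [nadjB_shift]; exact n12
  -- transitivity of the j-equality booleans
  have t1 : (!(jp == jq) || ((jp == jr) == (jq == jr))) = true := by
    by_cases h : jp = jq
    · subst h; simp
    · simp [h]
  have t2 : (!(jp == jr) || ((jp == jq) == (jq == jr))) = true := by
    by_cases h : jp = jr
    · subst h
      by_cases h2 : jp = jq
      · subst h2; simp
      · simp [h2, Ne.symm h2]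
    · simp [h]
  have t3 : (!(jq == jr) || ((jp == jq) == (jp == jr))) = true := by
    by_cases h : jq = jr
    · subst h; simp
    · simp [h]
  -- distinctness
  have d01 : (!(ip.val == iq.val && (jp == jq) && ((0:ℕ) == (xq - xp).val))) = true := by
    simp only [Bool.not_eq_true']
    apply Bool.eq_false_iff.mpr
    intro h
    simp only [Bool.and_eq_true, beq_iff_eq] at h
    obtain ⟨⟨hi, hj⟩, hx⟩ := h
    refine hpq (Subtype.ext ?_)
    show (ip, jp, xp) = (iq, jq, xq)
    rw [(finbeq ip iq).mp hi, hj, ((valsubeq xq xp).mp hx.symm).symm]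
  have d02 : (!(ip.val == ir.val && (jp == jr) && ((0:ℕ) == (xr - xp).val))) = true := by
    simp only [Bool.not_eq_true']
    apply Bool.eq_false_iff.mpr
    intro h
    simp only [Bool.and_eq_true, beq_iff_eq] at h
    obtain ⟨⟨hi, hj⟩, hx⟩ := h
    refine hpr (Subtype.ext ?_)
    show (ip, jp, xp) = (ir, jr, xr)
    rw [(finbeq ip ir).mp hi, hj, ((valsubeq xr xp).mp hx.symm).symm]
  have d12 : (!(iq.val == ir.val && (jq == jr) && ((xq - xp).val == (xr - xp).val))) = true := by
    simp only [Bool.not_eq_true']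
    apply Bool.eq_false_iff.mpr
    intro h
    simp only [Bool.and_eq_true, beq_iff_eq] at h
    obtain ⟨⟨hi, hj⟩, hx⟩ := h
    have hx' : xq = xr := by
      have := (valinj _ _).mp hx
      have h2 : xq - xp + xp = xr - xp + xp := by rw [this]
      rwa [sub_add_cancel, sub_add_cancel] at h2
    refine hqr (Subtype.ext ?_)
    show (iq, jq, xq) = (ir, jr, xr)
    rw [(finbeq iq ir).mp hi, hj, hx']
  -- the hypothesis bundle
  have hhyp : hypB ip.val iq.val ir.val 0 ((xq - xp).val) ((xr - xp).val)
      (jp == jq) (jp == jr) (jq == jr) = true := by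
    simp only [hypB, Bool.and_eq_true]
    exact ⟨⟨⟨⟨⟨⟨⟨⟨t1, t2⟩, t3⟩, d01⟩, d02⟩, d12⟩, s01⟩, s02⟩, s12⟩
  -- extract from the verified finite check
  have h := all_range_get keyB ip.is_lt
  have h := all_range_get h iq.is_lt
  have h := all_range_get h ir.is_lt
  have h := all_range_get h (ZMod.val_lt (xq - xp))
  have h := all_range_get h (ZMod.val_lt (xr - xp))
  have h := all_bool_get h (jp == jq)
  have h := all_bool_get h (jp == jr)
  have h := all_bool_get h (jq == jr)
  rw [hhyp] at h
  simp only [Bool.not_true, Bool.false_or] at h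
  simp only [findB, List.any_eq_true, List.mem_range] at h
  obtain ⟨k, hk4, y, hy4, s, hs6, hok⟩ := h
  have hyval : ((y : ZMod 4)).val = y := by
    rw [ZMod.val_natCast]; exact Nat.mod_eq_of_lt hy4
  have hxpz : ((xp - xp : ZMod 4)).val = 0 := by rw [sub_self, ZMod.val_zero]
  simp only [okB, Bool.and_eq_true] at hok
  obtain ⟨⟨⟨⟨⟨c0, c1⟩, c2⟩, a0⟩, a1⟩, a2⟩ := hok
  interval_cases s
  · have hki : (⟨k, hk4⟩ : Fin 4) = ip := Fin.val_injective (by simpa using c0)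
    have hjj : jp < m (⟨k, hk4⟩ : Fin 4) := by rw [hki]; exact hp
    refine ⟨⟨(⟨k, hk4⟩, jp, (y : ZMod 4) + xp), hjj⟩,
      adj_of_adjB m _ ip _ xp xp jp jp hjj hp _ _ ?_ ?_ (by rw [hyval, hxpz]; exact a0),
      adj_of_adjB m _ iq _ xq xp jp jq hjj hq _ _ ?_ ?_ (by rw [hyval]; exact a1),
      adj_of_adjB m _ ir _ xr xp jp jr hjj hr _ _ ?_ ?_ (by rw [hyval]; exact a2)⟩
    · intro h; simp at h <;> omega
    · intro h; simp at h <;> omega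
    · intro h; simp at h <;> omega
    · intro h; simp at h <;> omega
    · intro h; simp at h <;> omega
    · intro h; simp at h <;> omega
  · have hki : (⟨k, hk4⟩ : Fin 4) = iq := Fin.val_injective (by simpa using c1)
    have hjj : jq < m (⟨k, hk4⟩ : Fin 4) := by rw [hki]; exact hq
    refine ⟨⟨(⟨k, hk4⟩, jq, (y : ZMod 4) + xp), hjj⟩,
      adj_of_adjB m _ ip _ xp xp jq jp hjj hp _ _ ?_ ?_ (by rw [hyval, hxpz]; exact a0),
      adj_of_adjB m _ iq _ xq xp jq jq hjj hq _ _ ?_ ?_ (by rw [hyval]; exact a1),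
      adj_of_adjB m _ ir _ xr xp jq jr hjj hr _ _ ?_ ?_ (by rw [hyval]; exact a2)⟩
    · intro h; simp at h <;> omega
    · intro h; simp at h <;> omega
    · intro h; simp at h <;> omega
    · intro h; simp at h <;> omega
    · intro h; simp at h <;> omega
    · intro h; simp at h <;> omega
  · have hki : (⟨k, hk4⟩ : Fin 4) = ir := Fin.val_injective (by simpa using c2)
    have hjj : jr < m (⟨k, hk4⟩ : Fin 4) := by rw [hki]; exact hr
    refine ⟨⟨(⟨k, hk4⟩, jr, (y : ZMod 4) + xp), hjj⟩,
      adj_of_adjB m _ ip _ xp xp jr jp hjj hp _ _ ?_ ?_ (by rw [hyval, hxpz]; exact a0),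
      adj_of_adjB m _ iq _ xq xp jr jq hjj hq _ _ ?_ ?_ (by rw [hyval]; exact a1),
      adj_of_adjB m _ ir _ xr xp jr jr hjj hr _ _ ?_ ?_ (by rw [hyval]; exact a2)⟩
    · intro h; simp at h <;> omega
    · intro h; simp at h <;> omega
    · intro h; simp at h <;> omega
    · intro h; simp at h <;> omega
    · intro h; simp at h <;> omega
    · intro h; simp at h <;> omega
  · have hjj : (if jp = 0 then 1 else 0) < m (⟨k, hk4⟩ : Fin 4) :=
      lt_of_lt_of_le (fresh_lt jp) (hm _)
    refine ⟨⟨(⟨k, hk4⟩, (if jp = 0 then 1 else 0), (y : ZMod 4) + xp), hjj⟩,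
      adj_of_adjB m _ ip _ xp xp (if jp = 0 then 1 else 0) jp hjj hp _ _ ?_ ?_ (by rw [hyval, hxpz]; exact a0),
      adj_of_adjB m _ iq _ xq xp (if jp = 0 then 1 else 0) jq hjj hq _ _ ?_ ?_ (by rw [hyval]; exact a1),
      adj_of_adjB m _ ir _ xr xp (if jp = 0 then 1 else 0) jr hjj hr _ _ ?_ ?_ (by rw [hyval]; exact a2)⟩
    · intro h; simp at h <;> omega
    · exact fun _ => fresh_ne jp
    · intro h; simp at h <;> omega
    · intro h; simp at h <;> omega
    · intro h; simp at h <;> omega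
    · intro h; simp at h <;> omega
  · have hjj : (if jq = 0 then 1 else 0) < m (⟨k, hk4⟩ : Fin 4) :=
      lt_of_lt_of_le (fresh_lt jq) (hm _)
    refine ⟨⟨(⟨k, hk4⟩, (if jq = 0 then 1 else 0), (y : ZMod 4) + xp), hjj⟩,
      adj_of_adjB m _ ip _ xp xp (if jq = 0 then 1 else 0) jp hjj hp _ _ ?_ ?_ (by rw [hyval, hxpz]; exact a0),
      adj_of_adjB m _ iq _ xq xp (if jq = 0 then 1 else 0) jq hjj hq _ _ ?_ ?_ (by rw [hyval]; exact a1),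
      adj_of_adjB m _ ir _ xr xp (if jq = 0 then 1 else 0) jr hjj hr _ _ ?_ ?_ (by rw [hyval]; exact a2)⟩
    · intro h; simp at h <;> omega
    · intro h; simp at h <;> omega
    · intro h; simp at h <;> omega
    · exact fun _ => fresh_ne jq
    · intro h; simp at h <;> omega
    · intro h; simp at h <;> omega
  · have hjj : (if jr = 0 then 1 else 0) < m (⟨k, hk4⟩ : Fin 4) :=
      lt_of_lt_of_le (fresh_lt jr) (hm _)
    refine ⟨⟨(⟨k, hk4⟩, (if jr = 0 then 1 else 0), (y : ZMod 4) + xp), hjj⟩,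
      adj_of_adjB m _ ip _ xp xp (if jr = 0 then 1 else 0) jp hjj hp _ _ ?_ ?_ (by rw [hyval, hxpz]; exact a0),
      adj_of_adjB m _ iq _ xq xp (if jr = 0 then 1 else 0) jq hjj hq _ _ ?_ ?_ (by rw [hyval]; exact a1),
      adj_of_adjB m _ ir _ xr xp (if jr = 0 then 1 else 0) jr hjj hr _ _ ?_ ?_ (by rw [hyval]; exact a2)⟩
    · intro h; simp at h <;> omega
    · intro h; simp at h <;> omega
    · intro h; simp at h <;> omega
    · intro h; simp at h <;> omega
    · intro h; simp at h <;> omega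
    · exact fun _ => fresh_ne jr
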